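/- Let C be a linear code of length N over F_{2^k} that is weakly self-dual (C ⊆ C^⊥), and let B be a self-dual basis of F_{2^k} over F_2 (a basis equal to its own dual basis with respect to the trace form). Then the binary expansion C_B of C with respect to B is a weakly self-dual binary code: C_B ⊆ (C_B)^⊥. -/

import Mathlib

/-- The dual code of a linear code. -/
def dualCode {F : Type*} [CommRing F] {ι : Type*} [Fintype ι]
    (C : Submodule F (ι → F)) : Submodule F (ι → F) where
  carrier := { v | ∀ c ∈ C, ∑ i, c i * v i = 0 }
  zero_mem' := by intro c hc; simp
  add_mem' := by
    intro a b ha hb c hc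
    simp [mul_add, Finset.sum_add_distrib, ha c hc, hb c hc]
  smul_mem' := by
    intro r a ha c hc
    simp [Pi.smul_apply, smul_eq_mul, mul_left_comm, ← Finset.mul_sum, ha c hc]

/-- The binary expansion of a linear code `C ⊆ F^N` over the field
`F = F_{2^k}` with respect to a basis `B` of `F` over `F_2`. -/
def binExp {F : Type*} [Field F] [Algebra (ZMod 2) F] {N k : ℕ}
    (B : Module.Basis (Fin k) (ZMod 2) F) (C : Submodule F (Fin N → F)) :
    Submodule (ZMod 2) (Fin N × Fin k → ZMod 2) where
  carrier := { c | (fun i => ∑ j, c (i, j) • B j) ∈ C }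
  zero_mem' := by
    have h := C.zero_mem
    have e : (0 : Fin N → F) = fun i => ∑ j, (0 : Fin N × Fin k → ZMod 2) (i, j) • B j := by
      funext i; simp
    rwa [e] at h
  add_mem' := by
    intro a b ha hb
    have h := C.add_mem ha hb
    have e : ((fun i => ∑ j, a (i, j) • B j) + fun i => ∑ j, b (i, j) • B j)
        = fun i => ∑ j, (a + b) (i, j) • B j := by
      funext i
      simp [add_smul, Finset.sum_add_distrib]
    rwa [e] at h
  smul_mem' := by
    intro r a ha
    have h := C.smul_of_tower_mem r ha
    have e : (r • fun i => ∑ j, a (i, j) • B j)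
        = fun i => ∑ j, (r • a) (i, j) • B j := by
      funext i
      simp [Finset.smul_sum, smul_smul]
    rwa [e] at h

/-- The binary expansion of a weakly self-dual code over F_{2^k} with respect
to a self-dual basis is a weakly self-dual binary code. -/
theorem stmt_13 {F : Type*} [Field F] [Fintype F] [Algebra (ZMod 2) F]
    (N k : ℕ)
    (B : Module.Basis (Fin k) (ZMod 2) F)
    (hB : ∀ i j, Algebra.trace (ZMod 2) F (B i * B j) = if i = j then 1 else 0)
    (C : Submodule F (Fin N → F))
    (hsd : C ≤ dualCode C) :
    binExp B C ≤ dualCode (binExp B C) := by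

  intro a ha c hc
  have h1 : (fun i => ∑ j, a (i, j) • B j) ∈ dualCode C := hsd ha
  have h2 := h1 _ hc
  have h3 := congrArg (Algebra.trace (ZMod 2) F) h2
  rw [map_zero, map_sum] at h3
  have key : ∀ i, Algebra.trace (ZMod 2) F ((∑ j, c (i, j) • B j) * (∑ j, a (i, j) • B j))
      = ∑ j, c (i, j) * a (i, j) := by
    intro i
    rw [Finset.sum_mul_sum, map_sum]
    have : ∀ j ∈ Finset.univ, (Algebra.trace (ZMod 2) F) (∑ j', (c (i, j) • B j) * (a (i, j') • B j'))
        = ∑ j', c (i, j) * a (i, j') * (if j = j' then 1 else 0) := by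
      intro j _
      rw [map_sum]
      refine Finset.sum_congr rfl fun j' _ => ?_
      rw [smul_mul_assoc, mul_smul_comm, map_smul, map_smul, hB, smul_eq_mul, smul_eq_mul, mul_assoc]
    rw [Finset.sum_congr rfl this]
    refine Finset.sum_congr rfl fun j _ => ?_
    simp [← Finset.mul_sum, Finset.sum_ite_eq]
  simp only [key] at h3
  rw [Fintype.sum_prod_type]
  exact h3
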